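/- For every integer d ≥ 2, the (d-2)-nd iterated backward difference of the monomial x^d satisfies (D^{d-2} f)(x) = (d!/24)(12x² - 12(d-2)x + 3d² - 11d + 10) for all real x, where f(x) = x^d. -/

import Mathlib

/-- Backward difference operator: `(D f)(x) = f x - f (x-1)`. -/
noncomputable def bdiff (f : ℝ → ℝ) : ℝ → ℝ := fun x => f x - f (x - 1)

lemma bdiff_iter_sum (k : ℕ) (s : Finset ℕ) (F : ℕ → ℝ → ℝ) (x : ℝ) :
    bdiff^[k] (fun y => ∑ i ∈ s, F i y) x = ∑ i ∈ s, bdiff^[k] (F i) x := by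
  induction k generalizing F x with
  | zero => simp
  | succ k ih =>
      rw [Function.iterate_succ_apply]
      have h : bdiff (fun y => ∑ i ∈ s, F i y) = fun y => ∑ i ∈ s, bdiff (F i) y := by
        funext y; simp [bdiff, Finset.sum_sub_distrib]
      rw [h, ih]
      exact Finset.sum_congr rfl fun i _ => (congrFun (Function.iterate_succ_apply bdiff k (F i)) x).symm

lemma bdiff_iter_const_mul (k : ℕ) (c : ℝ) (f : ℝ → ℝ) (x : ℝ) :
    bdiff^[k] (fun y => c * f y) x = c * bdiff^[k] f x := by
  induction k generalizing f x with
  | zero => simp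
  | succ k ih =>
      rw [Function.iterate_succ_apply]
      have h : bdiff (fun y => c * f y) = fun y => c * bdiff f y := by
        funext y; simp [bdiff, mul_sub]
      rw [h, ih, Function.iterate_succ_apply]

lemma bdiff_iter_neg (k : ℕ) (f : ℝ → ℝ) (x : ℝ) :
    bdiff^[k] (fun y => -f y) x = -bdiff^[k] f x := by
  have := bdiff_iter_const_mul k (-1) f x
  simpa using this

lemma bdiff_pow (m : ℕ) :
    bdiff (fun y => y ^ m)
      = fun y => -∑ i ∈ Finset.range m, ((-1 : ℝ) ^ (m - i) * (m.choose i)) * y ^ i := by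
  funext y
  have hb : (y - 1) ^ m = ∑ i ∈ Finset.range (m + 1), y ^ i * (-1 : ℝ) ^ (m - i) * (m.choose i) := by
    have := add_pow y (-1 : ℝ) m
    simpa [sub_eq_add_neg] using this
  simp only [bdiff, hb, Finset.sum_range_succ]
  simp [Nat.sub_self]
  ring_nf

lemma bdiff_step (k m : ℕ) (x : ℝ) :
    bdiff^[k + 1] (fun y => y ^ m) x
      = -∑ i ∈ Finset.range m,
          ((-1 : ℝ) ^ (m - i) * (m.choose i)) * bdiff^[k] (fun y => y ^ i) x := by
  rw [Function.iterate_succ_apply, bdiff_pow]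
  rw [show (fun y => -∑ i ∈ Finset.range m, ((-1 : ℝ) ^ (m - i) * (m.choose i)) * y ^ i)
      = (fun y => -(fun z => ∑ i ∈ Finset.range m, ((-1 : ℝ) ^ (m - i) * (m.choose i)) * z ^ i) y)
      from rfl]
  rw [bdiff_iter_neg, bdiff_iter_sum]
  congr 1
  refine Finset.sum_congr rfl fun i _ => ?_
  exact bdiff_iter_const_mul k _ _ x

lemma bd_lt (k : ℕ) : ∀ j < k, ∀ x : ℝ, bdiff^[k] (fun y => y ^ j) x = 0 := by
  induction k with
  | zero => intro j hj; omega
  | succ k ih =>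
      intro j hj x
      rw [bdiff_step]
      rw [Finset.sum_eq_zero, neg_zero]
      intro i hi
      rw [ih i (by simp at hi; omega) x, mul_zero]

lemma bd_self (k : ℕ) (x : ℝ) :
    bdiff^[k] (fun y => y ^ k) x = (Nat.factorial k : ℝ) := by
  induction k generalizing x with
  | zero => simp
  | succ k ih =>
      rw [bdiff_step, Finset.sum_range_succ]
      rw [Finset.sum_eq_zero (fun i hi => by
        rw [bd_lt k i (by simpa using hi) x, mul_zero])]
      rw [ih]
      simp [Nat.succ_sub, Nat.factorial_succ]
      push_cast
      ring

lemma bd_one (k : ℕ) (x : ℝ) :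
    bdiff^[k] (fun y => y ^ (k + 1)) x = (Nat.factorial (k + 1) : ℝ) * (x - k / 2) := by
  induction k generalizing x with
  | zero => simp
  | succ k ih =>
      rw [bdiff_step, Finset.sum_range_succ, Finset.sum_range_succ]
      rw [Finset.sum_eq_zero (fun i hi => by
        rw [bd_lt k i (by simpa using hi) x, mul_zero])]
      rw [ih, bd_self]
      have h1 : (k + 2).choose (k + 1) = k + 2 := Nat.choose_succ_self_right (k + 1)
      have h2 : ((k + 2).choose k : ℝ) = (k + 2) * (k + 1) / 2 := by
        rw [show (k + 2).choose k = (k + 2).choose 2 by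
          rw [← Nat.choose_symm (by omega)]; congr 1; omega]
        rw [Nat.cast_choose_two]
        push_cast
        ring
      have h3 : k + 1 + 1 - (k + 1) = 1 := by omega
      have h4 : k + 1 + 1 - k = 2 := by omega
      rw [h3, h4, h1, h2]
      simp [Nat.factorial_succ]
      push_cast
      ring

lemma cast_choose_three (n : ℕ) :
    (((n + 3).choose 3 : ℕ) : ℝ) = (n + 3) * (n + 2) * (n + 1) / 6 := by
  have h := Nat.choose_mul_factorial_mul_factorial (show 3 ≤ n + 3 by omega)
  have h' : (n + 3).choose 3 * 6 = (n + 3) * (n + 2) * (n + 1) := by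
    have h6 : Nat.factorial 3 = 6 := rfl
    have hs : n + 3 - 3 = n := by omega
    rw [h6, hs] at h
    have hf : (n + 3).factorial = (n + 3) * (n + 2) * (n + 1) * n.factorial := by
      simp [show n + 3 = n + 2 + 1 by omega, show n + 2 = n + 1 + 1 by omega,
        Nat.factorial_succ]
      ring
    rw [hf] at h
    have := Nat.factorial_pos n
    exact Nat.eq_of_mul_eq_mul_right this (by linarith [h])
  have := congrArg (fun m : ℕ => (m : ℝ)) h'
  push_cast at this ⊢
  linarith

lemma bd_two (k : ℕ) (x : ℝ) :
    bdiff^[k] (fun y => y ^ (k + 2)) x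
      = (Nat.factorial (k + 2) : ℝ) / 24 *
          (12 * x ^ 2 - 12 * k * x + 3 * (k : ℝ) ^ 2 + k) := by
  induction k generalizing x with
  | zero => norm_num [Nat.factorial]; ring
  | succ k ih =>
      rw [bdiff_step, Finset.sum_range_succ, Finset.sum_range_succ, Finset.sum_range_succ]
      rw [Finset.sum_eq_zero (fun i hi => by
        rw [bd_lt k i (by simpa using hi) x, mul_zero])]
      rw [ih, bd_one, bd_self]
      have h1 : (k + 3).choose (k + 2) = k + 3 := Nat.choose_succ_self_right (k + 2)
      have h2 : ((k + 3).choose (k + 1) : ℝ) = (k + 3) * (k + 2) / 2 := by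
        rw [show (k + 3).choose (k + 1) = (k + 3).choose 2 by
          rw [← Nat.choose_symm (by omega)]; congr 1; omega]
        rw [Nat.cast_choose_two]
        push_cast
        ring
      have h3 : ((k + 3).choose k : ℝ) = (k + 3) * (k + 2) * (k + 1) / 6 := by
        rw [show (k + 3).choose k = (k + 3).choose 3 by
          rw [← Nat.choose_symm (by omega)]; congr 1; omega]
        have := cast_choose_three k
        push_cast at this ⊢
        linarith
      have e1 : k + 1 + 2 - (k + 2) = 1 := by omega
      have e2 : k + 1 + 2 - (k + 1) = 2 := by omega
      have e3 : k + 1 + 2 - k = 3 := by omega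
      rw [show k + 1 + 2 = k + 3 by omega] at *
      rw [e1, e2, e3, h1, h2, h3]
      have hf : (Nat.factorial (k + 3) : ℝ) = (k + 3) * (k + 2) * (k + 1) * Nat.factorial k := by
        simp [show k + 3 = k + 2 + 1 by omega, show k + 2 = k + 1 + 1 by omega,
          Nat.factorial_succ]
        push_cast
        ring
      have hf2 : (Nat.factorial (k + 2) : ℝ) = (k + 2) * (k + 1) * Nat.factorial k := by
        simp [show k + 2 = k + 1 + 1 by omega, Nat.factorial_succ]
        push_cast
        ring
      have hf1 : (Nat.factorial (k + 1) : ℝ) = (k + 1) * Nat.factorial k := by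
        simp [Nat.factorial_succ]
      rw [hf, hf2, hf1]
      push_cast
      ring

theorem stmt1 (d : ℕ) (hd : 2 ≤ d) (x : ℝ) :
    bdiff^[d - 2] (fun y : ℝ => y ^ d) x =
      (Nat.factorial d : ℝ) / 24 *
        (12 * x ^ 2 - 12 * ((d : ℝ) - 2) * x + 3 * (d : ℝ) ^ 2 - 11 * (d : ℝ) + 10) := by
  obtain ⟨k, rfl⟩ : ∃ k, d = k + 2 := ⟨d - 2, by omega⟩
  rw [show k + 2 - 2 = k by omega, bd_two]
  push_cast
  ring
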